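/- Let p ≥ 1 and let x_1,…,x_n and A_{ij} (1 ≤ i ≤ m, 1 ≤ j ≤ n) be jointly independent, identically distributed real random variables with μ := E[|x_1|^p] and σ² := Var[|x_1|^p] both finite. Then Var[(1/(mn))·Σ_{i=1}^m Σ_{j=1}^n |x_j A_{ij}|^p] = σ²·(σ² + (m+1)μ²)/(mn). -/

import Mathlib

open Finset MeasureTheory ProbabilityTheory

/-- For i.i.d. entries of `x` and `A` with `μ = E[|x_1|^p]` and `σ² = Var[|x_1|^p]`,
the variance of `(1/(mn)) ∑_{i,j} |x_j A_{ij}|^p` is `σ²(σ² + (m+1)μ²)/(mn)`. -/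
theorem stmt_12 {Ω : Type*} [MeasurableSpace Ω] (P : Measure Ω) [IsProbabilityMeasure P]
    {m n : ℕ} [NeZero m] [NeZero n] (p : ℝ) (hp : 1 ≤ p)
    (x : Fin n → Ω → ℝ) (A : Fin m → Fin n → Ω → ℝ) (μp σ2 : ℝ)
    (hmx : ∀ j, Measurable (x j)) (hmA : ∀ i j, Measurable (A i j))
    (hindep : iIndepFun
      (Sum.elim x (fun ij : Fin m × Fin n => A ij.1 ij.2)) P)
    (hident : ∀ k : Fin n ⊕ (Fin m × Fin n),
      IdentDistrib (Sum.elim x (fun ij : Fin m × Fin n => A ij.1 ij.2) k) (x 0) P P)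
    (hL2 : MemLp (fun ω => |x 0 ω| ^ p) 2 P)
    (hmom : ∫ ω, |x 0 ω| ^ p ∂P = μp)
    (hvar : variance (fun ω => |x 0 ω| ^ p) P = σ2) :
    variance (fun ω => (1 / ((m : ℝ) * n)) * ∑ i, ∑ j, |x j ω * A i j ω| ^ p) P
      = σ2 * (σ2 + ((m : ℝ) + 1) * μp ^ 2) / ((m : ℝ) * n) := by
  classical
  set ι := Fin n ⊕ (Fin m × Fin n)
  set F : ι → Ω → ℝ := Sum.elim x (fun ij : Fin m × Fin n => A ij.1 ij.2) with hF
  have hmF : ∀ k, Measurable (F k) := by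
    rintro (j | ij)
    · exact hmx j
    · exact hmA ij.1 ij.2
  set g : ℝ → ℝ := fun t => |t| ^ p with hgdef
  have hg : Measurable g :=
    ((Real.continuous_rpow_const (le_trans zero_le_one hp)).comp continuous_abs).measurable
  -- the transformed variables
  set G : ι → Ω → ℝ := fun k ω => g (F k ω) with hG
  have hmG : ∀ k, Measurable (G k) := fun k => hg.comp (hmF k)
  have hidG : ∀ k, IdentDistrib (G k) (fun ω => g (x 0 ω)) P P :=
    fun k => (hident k).comp hg
  have hL2G : ∀ k, MemLp (G k) 2 P := fun k => (hidG k).symm.memLp_snd hL2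
  have hintG : ∀ k, ∫ ω, G k ω ∂P = μp := fun k => by
    rw [(hidG k).integral_eq]; exact hmom
  have hvarG : ∀ k, variance (G k) P = σ2 := fun k => by
    rw [(hidG k).variance_eq]; exact hvar
  -- column variables
  set X : Fin n → Ω → ℝ := fun j => G (Sum.inl j) with hX
  set T : Fin n → Ω → ℝ := fun j ω => ∑ i : Fin m, G (Sum.inr (i, j)) ω with hT
  set Y : Fin n → Ω → ℝ := fun j ω => X j ω * T j ω with hY
  -- pointwise rewrite of the sum
  have hrw : ∀ ω, ∑ i : Fin m, ∑ j : Fin n, |x j ω * A i j ω| ^ p = ∑ j : Fin n, Y j ω := by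
    intro ω
    rw [Finset.sum_comm]
    refine Finset.sum_congr rfl fun j _ => ?_
    simp only [hY, hX, hT, hG, hF, Sum.elim_inl, Sum.elim_inr, Finset.mul_sum, hgdef]
    refine Finset.sum_congr rfl fun i _ => ?_
    rw [abs_mul, Real.mul_rpow (abs_nonneg _) (abs_nonneg _)]
  -- independence of X j and T j
  have hmT : ∀ j, Measurable (T j) := fun j => Finset.measurable_sum _ fun i _ => hmG _
  have hindepXT : ∀ j, IndepFun (X j) (T j) P := by
    intro j
    have hdisj : Disjoint ({Sum.inl j} : Finset ι)
        (Finset.univ.image fun i : Fin m => (Sum.inr (i, j) : ι)) := by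
      simp [Finset.disjoint_left]
    have h1 := hindep.indepFun_finset _ _ hdisj hmF
    have hmem : ∀ i : Fin m, (Sum.inr (i, j) : ι) ∈
        (Finset.univ.image fun i : Fin m => (Sum.inr (i, j) : ι)) := by
      intro i; simp
    have := h1.comp
      (φ := fun v : (({Sum.inl j} : Finset ι) : Type _) → ℝ =>
        g (v ⟨Sum.inl j, Finset.mem_singleton_self _⟩))
      (ψ := fun v : ((Finset.univ.image fun i : Fin m => (Sum.inr (i, j) : ι)) : Type _) → ℝ =>
        ∑ i : Fin m, g (v ⟨Sum.inr (i, j), hmem i⟩))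
      (hg.comp (measurable_pi_apply _))
      (Finset.measurable_sum _ fun i _ => hg.comp (measurable_pi_apply _))
    exact this
  -- pairwise independence of the Y j
  have hindepYY : Set.Pairwise (↑(Finset.univ : Finset (Fin n)))
      fun j j' => IndepFun (Y j) (Y j') P := by
    intro j _ j' _ hjj'
    have hdisj : Disjoint
        (insert (Sum.inl j) (Finset.univ.image fun i : Fin m => (Sum.inr (i, j) : ι)))
        (insert (Sum.inl j') (Finset.univ.image fun i : Fin m => (Sum.inr (i, j') : ι))) := by
      simp only [Finset.disjoint_left, Finset.mem_insert, Finset.mem_image, Finset.mem_univ,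
        true_and]
      rintro a (rfl | ⟨i, rfl⟩) h
      · rcases h with h | ⟨i', h⟩
        · exact hjj' (Sum.inl.inj h)
        · exact nomatch h
      · rcases h with h | ⟨i', h⟩
        · exact nomatch h
        · exact hjj' (congrArg Prod.snd (Sum.inr.inj h)).symm
    have h1 := hindep.indepFun_finset _ _ hdisj hmF
    have hmemS : ∀ (j : Fin n) (i : Fin m), (Sum.inr (i, j) : ι) ∈
        insert (Sum.inl j) (Finset.univ.image fun i : Fin m => (Sum.inr (i, j) : ι)) := by
      intro j i; simp
    have hmemS' : ∀ j : Fin n, (Sum.inl j : ι) ∈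
        insert (Sum.inl j) (Finset.univ.image fun i : Fin m => (Sum.inr (i, j) : ι)) := by
      intro j; simp
    have := h1.comp
      (φ := fun v : {k : ι // k ∈ insert (Sum.inl j)
          (Finset.univ.image fun i : Fin m => (Sum.inr (i, j) : ι))} → ℝ =>
        g (v ⟨Sum.inl j, hmemS' j⟩) * ∑ i : Fin m, g (v ⟨Sum.inr (i, j), hmemS j i⟩))
      (ψ := fun v : {k : ι // k ∈ insert (Sum.inl j')
          (Finset.univ.image fun i : Fin m => (Sum.inr (i, j') : ι))} → ℝ =>
        g (v ⟨Sum.inl j', hmemS' j'⟩) * ∑ i : Fin m, g (v ⟨Sum.inr (i, j'), hmemS j' i⟩))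
      ((hg.comp (measurable_pi_apply _)).mul
        (Finset.measurable_sum _ fun i _ => hg.comp (measurable_pi_apply _)))
      ((hg.comp (measurable_pi_apply _)).mul
        (Finset.measurable_sum _ fun i _ => hg.comp (measurable_pi_apply _)))
    exact this
  -- moments of T j
  have hTsum : ∀ j, T j = ∑ i : Fin m, G (Sum.inr (i, j)) := by
    intro j; funext ω; simp [hT]
  have hL2T : ∀ j, MemLp (T j) 2 P := by
    intro j
    rw [hTsum j]
    exact memLp_finset_sum' _ fun i _ => hL2G _
  have hintT : ∀ j, ∫ ω, T j ω ∂P = m * μp := by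
    intro j
    have : ∫ ω, T j ω ∂P = ∑ i : Fin m, ∫ ω, G (Sum.inr (i, j)) ω ∂P :=
      integral_finset_sum _ fun i _ => (hL2G _).integrable one_le_two
    rw [this]
    simp [hintG]
  have hvarT : ∀ j, variance (T j) P = m * σ2 := by
    intro j
    have hpair : Set.Pairwise (↑(Finset.univ : Finset (Fin m)))
        fun i i' => IndepFun (G (Sum.inr (i, j))) (G (Sum.inr (i', j))) P := by
      intro i _ i' _ hii'
      have hne : (Sum.inr (i, j) : ι) ≠ Sum.inr (i', j) := by
        intro h; exact hii' (congrArg Prod.fst (Sum.inr.inj h))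
      exact (hindep.indepFun hne).comp hg hg
    have : variance (∑ i : Fin m, G (Sum.inr (i, j))) P
        = ∑ i : Fin m, variance (G (Sum.inr (i, j))) P :=
      IndepFun.variance_sum (fun i _ => hL2G _) hpair
    rw [hTsum j, this]
    simp [hvarG]
  -- second moments
  have hEX2 : ∀ j, ∫ ω, X j ω ^ 2 ∂P = σ2 + μp ^ 2 := by
    intro j
    have := variance_eq_sub (hL2G (Sum.inl j))
    simp only [Pi.pow_apply] at this
    have h1 : ∫ ω, X j ω ^ 2 ∂P = variance (X j) P + (∫ ω, X j ω ∂P) ^ 2 := by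
      rw [this]; ring
    rw [h1, hvarG, hintG]
  have hET2 : ∀ j, ∫ ω, T j ω ^ 2 ∂P = m * σ2 + (m * μp) ^ 2 := by
    intro j
    have := variance_eq_sub (hL2T j)
    simp only [Pi.pow_apply] at this
    have h1 : ∫ ω, T j ω ^ 2 ∂P = variance (T j) P + (∫ ω, T j ω ∂P) ^ 2 := by
      rw [this]; ring
    rw [h1, hvarT, hintT]
  -- integrability of squares
  have hintX2 : ∀ j, Integrable (fun ω => X j ω ^ 2) P := fun j =>
    (memLp_two_iff_integrable_sq (hL2G (Sum.inl j)).aestronglyMeasurable).1 (hL2G _)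
  have hintT2 : ∀ j, Integrable (fun ω => T j ω ^ 2) P := fun j =>
    (memLp_two_iff_integrable_sq (hL2T j).aestronglyMeasurable).1 (hL2T j)
  have hindepXT2 : ∀ j, IndepFun (fun ω => X j ω ^ 2) (fun ω => T j ω ^ 2) P := fun j =>
    (hindepXT j).comp (measurable_id.pow_const 2) (measurable_id.pow_const 2)
  -- Memℒp of Y j
  have hY2 : ∀ j, (fun ω => Y j ω ^ 2) = fun ω => X j ω ^ 2 * T j ω ^ 2 := by
    intro j; funext ω; simp [hY, mul_pow]
  have hL2Y : ∀ j, MemLp (Y j) 2 P := by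
    intro j
    have hmY : Measurable (Y j) := (hmG _).mul (hmT j)
    rw [memLp_two_iff_integrable_sq hmY.aestronglyMeasurable, hY2 j]
    exact (hindepXT2 j).integrable_mul (hintX2 j) (hintT2 j)
  -- variance of Y j
  have hvarY : ∀ j, variance (Y j) P
      = (σ2 + μp ^ 2) * (m * σ2 + (m * μp) ^ 2) - (μp * (m * μp)) ^ 2 := by
    intro j
    have hEY : ∫ ω, Y j ω ∂P = μp * (m * μp) := by
      have := (hindepXT j).integral_fun_mul_eq_mul_integral
        ((hL2G (Sum.inl j)).integrable one_le_two).aestronglyMeasurable ((hL2T j).integrable one_le_two).aestronglyMeasurable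
      calc ∫ ω, Y j ω ∂P = ∫ ω, X j ω * T j ω ∂P := rfl
        _ = (∫ ω, X j ω ∂P) * ∫ ω, T j ω ∂P := this
        _ = μp * (m * μp) := by rw [hintG, hintT]
    have hEY2 : ∫ ω, Y j ω ^ 2 ∂P = (σ2 + μp ^ 2) * (m * σ2 + (m * μp) ^ 2) := by
      have := (hindepXT2 j).integral_fun_mul_eq_mul_integral (hintX2 j).aestronglyMeasurable (hintT2 j).aestronglyMeasurable
      calc ∫ ω, Y j ω ^ 2 ∂P = ∫ ω, X j ω ^ 2 * T j ω ^ 2 ∂P := by rw [← hY2 j]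
        _ = (∫ ω, X j ω ^ 2 ∂P) * ∫ ω, T j ω ^ 2 ∂P := this
        _ = (σ2 + μp ^ 2) * (m * σ2 + (m * μp) ^ 2) := by rw [hEX2, hET2]
    have := variance_eq_sub (hL2Y j)
    simp only [Pi.pow_apply] at this
    rw [this, hEY2, hEY]
  -- put it together
  have hfun : (fun ω => (1 / ((m : ℝ) * n)) * ∑ i, ∑ j, |x j ω * A i j ω| ^ p)
      = fun ω => (1 / ((m : ℝ) * n)) * (∑ j : Fin n, Y j) ω := by
    funext ω
    rw [hrw ω]
    simp
  rw [hfun, variance_const_mul,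
    IndepFun.variance_sum (fun j _ => hL2Y j) hindepYY]
  simp only [hvarY]
  rw [Finset.sum_const, Finset.card_univ, Fintype.card_fin, nsmul_eq_mul]
  have hm : (m : ℝ) ≠ 0 := Nat.cast_ne_zero.2 (NeZero.ne m)
  have hn : (n : ℝ) ≠ 0 := Nat.cast_ne_zero.2 (NeZero.ne n)
  field_simp
  ring
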